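/- Let g be an element of a finite symplectic group and R a symplectic reflection in it. If there exist c¹, c² in Ker(g - κ) whose projections to V_R = Im(R-1) have nonzero symplectic pairing, then Ker(Rg - κ) = Ker(R - 1) ∩ Ker(g - κ), and dim Ker(Rg - κ) = dim Ker(g - κ) - 2. -/

import Mathlib

/-- The key lemma. Let `κ = ±1`, `ω` a nondegenerate alternating form on `V = ℂ^{2N}`,
`G` a finite subgroup of `Sp(V, ω)`, `g, R ∈ G` with `rank(R - 1) = 2`.  If there exist
`c¹, c² ∈ Ker(g - κ)` whose `V_R = Im(R-1)` components have nonzero symplectic pairing,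
then `Ker(Rg - κ) = Ker(R - 1) ∩ Ker(g - κ)` and
`dim Ker(Rg - κ) = dim Ker(g - κ) - 2`. -/
theorem symplectic_reflection_key_lemma
    (N : ℕ) (V : Type*) [AddCommGroup V] [Module ℂ V] [FiniteDimensional ℂ V]
    (hdim : Module.finrank ℂ V = 2 * N)
    (ω : LinearMap.BilinForm ℂ V) (halt : ω.IsAlt) (hnd : ω.Nondegenerate)
    (κ : ℂ) (hκ : κ = 1 ∨ κ = -1)
    (G : Subgroup (V ≃ₗ[ℂ] V)) [Finite G]
    (hG : ∀ h ∈ G, ∀ x y, ω (h x) (h y) = ω x y)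
    (g R : V ≃ₗ[ℂ] V) (hgG : g ∈ G) (hRG : R ∈ G)
    (fg fR : Module.End ℂ V)
    (hfg : fg = (g : V →ₗ[ℂ] V)) (hfR : fR = (R : V →ₗ[ℂ] V))
    (hrank : Module.finrank ℂ (LinearMap.range (fR - 1)) = 2)
    -- there exist `c¹, c²` in `Ker(g - κ)`, with decompositions `cⁱ = vⁱ + zⁱ`,
    -- `vⁱ ∈ V_R`, `zⁱ ∈ Z_R`, such that `ω_R(c¹, c²) = ω(v¹, v²) ≠ 0`:
    (hc : ∃ c₁ c₂ v₁ v₂ z₁ z₂ : V,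
      c₁ ∈ LinearMap.ker (fg - κ • 1) ∧ c₂ ∈ LinearMap.ker (fg - κ • 1) ∧
      v₁ ∈ LinearMap.range (fR - 1) ∧ v₂ ∈ LinearMap.range (fR - 1) ∧
      z₁ ∈ LinearMap.ker (fR - 1) ∧ z₂ ∈ LinearMap.ker (fR - 1) ∧
      c₁ = v₁ + z₁ ∧ c₂ = v₂ + z₂ ∧ ω v₁ v₂ ≠ 0) :
    LinearMap.ker (fR * fg - κ • 1)
        = LinearMap.ker (fR - 1) ⊓ LinearMap.ker (fg - κ • 1) ∧
    Module.finrank ℂ (LinearMap.ker (fR * fg - κ • 1))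
        = Module.finrank ℂ (LinearMap.ker (fg - κ • 1)) - 2 := by
  classical
  obtain ⟨c₁, c₂, v₁, v₂, z₁, z₂, hc₁, hc₂, hv₁, hv₂, hz₁, hz₂, he₁, he₂, ha⟩ := hc
  have hκ0 : κ ≠ 0 := by rcases hκ with h | h <;> simp [h]
  have hκ2 : κ * κ = 1 := by rcases hκ with h | h <;> simp [h]
  have hskew : ∀ x y, ω x y = -ω y x := fun x y => (LinearMap.IsAlt.neg halt y x).symm
  set W := LinearMap.range (fR - 1) with hW
  set Z := LinearMap.ker (fR - 1) with hZ
  set K := LinearMap.ker (fg - κ • 1) with hK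
  have hmemZ : ∀ x, x ∈ Z ↔ fR x = x := by
    intro x
    rw [hZ, LinearMap.mem_ker, LinearMap.sub_apply, Module.End.one_apply, sub_eq_zero]
  have hmemK : ∀ x, x ∈ K ↔ fg x = κ • x := by
    intro x
    rw [hK, LinearMap.mem_ker, LinearMap.sub_apply, LinearMap.smul_apply,
      Module.End.one_apply, sub_eq_zero]
  have hRapp : ∀ x, fR x = R x := by intro x; rw [hfR]; rfl
  have hgapp : ∀ x, fg x = g x := by intro x; rw [hfg]; rfl
  -- orthogonality of W = Im(R-1) and Z = Ker(R-1)
  have hZW : ∀ w ∈ W, ∀ z ∈ Z, ω w z = 0 := by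
    intro w hw z hz
    obtain ⟨y, rfl⟩ := hw
    have hz' : R z = z := by rw [← hRapp]; exact (hmemZ z).1 hz
    have h1 : ((fR - 1) y) = R y - y := by
      rw [LinearMap.sub_apply, Module.End.one_apply, hRapp]
    have h2 : ω (R y) z = ω y z := by
      conv_lhs => rw [← hz']
      exact hG R hRG y z
    rw [h1, map_sub, LinearMap.sub_apply, h2, sub_self]
  -- the auxiliary map ψ
  set ψ : V →ₗ[ℂ] ℂ × ℂ := LinearMap.prod (ω.flip v₁) (ω.flip v₂) with hψdef
  have hψ : ∀ x, ψ x = (ω x v₁, ω x v₂) := fun x => rfl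
  set a := ω v₁ v₂ with haa
  have hψv₁ : ψ v₁ = (0, a) := by rw [hψ]; simp [halt v₁, haa]
  have hψv₂ : ψ v₂ = (-a, 0) := by rw [hψ]; rw [hskew v₂ v₁, halt v₂]
  have hψZ : ∀ z ∈ Z, ψ z = 0 := by
    intro z hz
    rw [hψ, Prod.mk_eq_zero]
    constructor
    · rw [hskew z v₁, hZW v₁ hv₁ z hz, neg_zero]
    · rw [hskew z v₂, hZW v₂ hv₂ z hz, neg_zero]
  have hψc₁ : ψ c₁ = (0, a) := by rw [he₁, map_add, hψZ z₁ hz₁, add_zero, hψv₁]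
  have hψc₂ : ψ c₂ = (-a, 0) := by rw [he₂, map_add, hψZ z₂ hz₂, add_zero, hψv₂]
  -- surjectivity of ψ restricted to any submodule containing suitable elements
  have hsurj : ∀ (P : Submodule ℂ V) (u₁ u₂ : V), u₁ ∈ P → u₂ ∈ P →
      ψ u₁ = (0, a) → ψ u₂ = (-a, 0) →
      LinearMap.range (ψ.domRestrict P) = ⊤ := by
    intro P u₁ u₂ h₁ h₂ hu₁ hu₂
    rw [LinearMap.range_eq_top]
    intro p
    refine ⟨⟨(p.2 / a) • u₁ - (p.1 / a) • u₂,
      P.sub_mem (P.smul_mem _ h₁) (P.smul_mem _ h₂)⟩, ?_⟩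
    rw [LinearMap.domRestrict_apply, map_sub, map_smul, map_smul, hu₁, hu₂]
    have e1 : p.2 / a * a = p.2 := div_mul_cancel₀ _ ha
    have e2 : p.1 / a * a = p.1 := div_mul_cancel₀ _ ha
    ext
    · simp [mul_neg, e2]
    · simp [e1]
  have hCC2 : Module.finrank ℂ (ℂ × ℂ) = 2 := by
    simp [Module.finrank_prod]
  -- injectivity on W
  have hWinj : ∀ w ∈ W, ψ w = 0 → w = 0 := by
    have htop := hsurj W v₁ v₂ hv₁ hv₂ hψv₁ hψv₂
    have hrk := LinearMap.finrank_range_add_finrank_ker (ψ.domRestrict W)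
    rw [htop, finrank_top, hCC2, hrank] at hrk
    have hker0 : Module.finrank ℂ (LinearMap.ker (ψ.domRestrict W)) = 0 := by omega
    have hkerbot : LinearMap.ker (ψ.domRestrict W) = ⊥ :=
      Submodule.finrank_eq_zero.1 hker0
    intro w hw hw0
    have : (⟨w, hw⟩ : W) ∈ LinearMap.ker (ψ.domRestrict W) := by
      rw [LinearMap.mem_ker, LinearMap.domRestrict_apply, hw0]
    rw [hkerbot, Submodule.mem_bot] at this
    exact congrArg Subtype.val this
  -- W ⊔ Z = ⊤
  have hdisj : W ⊓ Z = ⊥ := by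
    rw [eq_bot_iff]
    intro x hx
    rw [Submodule.mem_bot]
    exact hWinj x hx.1 (hψZ x hx.2)
  have hsum : Module.finrank ℂ W + Module.finrank ℂ Z = Module.finrank ℂ V :=
    LinearMap.finrank_range_add_finrank_ker (fR - 1)
  have hsup : W ⊔ Z = ⊤ := by
    apply Submodule.eq_top_of_finrank_eq
    have := Submodule.finrank_sup_add_finrank_inf_eq W Z
    rw [hdisj] at this
    simp only [finrank_bot, add_zero] at this
    omega
  -- ker ψ = Z
  have hkerψZ : ∀ x, ψ x = 0 → x ∈ Z := by
    intro x hx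
    have hxmem : x ∈ W ⊔ Z := by rw [hsup]; exact Submodule.mem_top
    obtain ⟨v, hv, z, hz, rfl⟩ := Submodule.mem_sup.1 hxmem
    have : ψ v = 0 := by
      have := hψZ z hz
      rw [map_add, this, add_zero] at hx
      exact hx
    have hv0 : v = 0 := hWinj v hv this
    rw [hv0, zero_add]
    exact hz
  -- membership in ker (fR * fg - κ • 1)
  have hmemE : ∀ x, x ∈ LinearMap.ker (fR * fg - κ • 1) ↔ fR (fg x) = κ • x := by
    intro x
    rw [LinearMap.mem_ker, LinearMap.sub_apply, LinearMap.smul_apply,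
      Module.End.one_apply, sub_eq_zero, Module.End.mul_apply]
  -- the set-theoretic equality
  have heq : LinearMap.ker (fR * fg - κ • 1) = Z ⊓ K := by
    ext x
    rw [hmemE, Submodule.mem_inf, hmemZ, hmemK]
    constructor
    · intro hx
      -- w := fg x - κ • x lies in W and is ω-orthogonal to Ker(g - κ)
      set w := fg x - κ • x with hwdef
      have hwW : w ∈ W := by
        refine ⟨-(fg x), ?_⟩
        rw [LinearMap.sub_apply, Module.End.one_apply, map_neg, hx, hwdef]
        abel
      have hworth : ∀ c ∈ K, ω w c = 0 := by
        intro c hcK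
        have hgc : g c = κ • c := by rw [← hgapp]; exact (hmemK c).1 hcK
        have h3 : ω (g x) (g c) = ω x c := hG g hgG x c
        rw [hgc, map_smul, smul_eq_mul] at h3
        have h4 : ω (fg x) c = κ * ω x c := by
          rw [hgapp]
          calc ω (g x) c = (κ * κ) * ω (g x) c := by rw [hκ2, one_mul]
            _ = κ * ω x c := by rw [mul_assoc, h3]
        rw [hwdef, map_sub, LinearMap.sub_apply, h4, map_smul,
          LinearMap.smul_apply, smul_eq_mul, sub_self]
      have hwv₁ : ω w v₁ = 0 := by
        have h5 := hworth c₁ hc₁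
        rw [he₁, map_add, hZW w hwW z₁ hz₁, add_zero] at h5
        exact h5
      have hwv₂ : ω w v₂ = 0 := by
        have h5 := hworth c₂ hc₂
        rw [he₂, map_add, hZW w hwW z₂ hz₂, add_zero] at h5
        exact h5
      have hw0 : w = 0 := by
        apply hWinj w hwW
        rw [hψ, hwv₁, hwv₂]
        rfl
      have hgx : fg x = κ • x := by
        rw [hwdef, sub_eq_zero] at hw0
        exact hw0
      refine ⟨?_, hgx⟩
      rw [hgx, map_smul] at hx
      exact smul_right_injective V hκ0 hx
    · rintro ⟨h1, h2⟩
      rw [h2, map_smul, h1]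
  refine ⟨heq, ?_⟩
  -- dimension count
  have htopK := hsurj K c₁ c₂ hc₁ hc₂ hψc₁ hψc₂
  have hrkK := LinearMap.finrank_range_add_finrank_ker (ψ.domRestrict K)
  rw [htopK, finrank_top, hCC2] at hrkK
  have hkerK : LinearMap.ker (ψ.domRestrict K) = Submodule.comap K.subtype (Z ⊓ K) := by
    rw [LinearMap.ker_domRestrict]
    ext x
    simp only [Submodule.mem_comap, LinearMap.mem_ker, Submodule.mem_inf]
    constructor
    · intro hx
      exact ⟨hkerψZ _ hx, x.2⟩
    · intro hx
      exact hψZ _ hx.1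
  have hfr : Module.finrank ℂ (LinearMap.ker (ψ.domRestrict K))
      = Module.finrank ℂ (Z ⊓ K : Submodule ℂ V) := by
    rw [hkerK]
    exact (Submodule.comapSubtypeEquivOfLe inf_le_right).finrank_eq
  rw [hfr] at hrkK
  rw [heq]
  omega
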